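/- Let A be a d×n integer matrix with pointed semigroup ℕA. The ℤ^d-graded prime ideals of R_A = ℂ[∂_1,…,∂_n] that contain the toric ideal I_A are exactly the ideals I_A^F = ⟨∂_k : a_k ∉ F⟩ + R_A·I_F, where F runs over the prime faces of A (zero sets in A of linear functionals nonnegative on ℕA), and I_F is the toric ideal of F in ℂ[∂_k : a_k ∈ F]. Moreover R_A/I_A^F ≅ R_F/I_F. -/

import Mathlib

open MvPolynomial

variable {d n : ℕ}

/-- The `ℤ^d`-degree of a monomial exponent `u`, with `deg ∂_j = −a_j`. -/
def degA (A : Matrix (Fin d) (Fin n) ℤ) (u : Fin n →₀ ℕ) : Fin d → ℤ :=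
  fun i => -(∑ j, A i j * (u j : ℤ))

/-- The homogeneous component of degree `δ` of a polynomial. -/
noncomputable def homogComponentA (A : Matrix (Fin d) (Fin n) ℤ)
    (δ : Fin d → ℤ) (p : MvPolynomial (Fin n) ℂ) : MvPolynomial (Fin n) ℂ :=
  haveI := Classical.decEq (Fin d → ℤ)
  ∑ u ∈ p.support.filter (fun u => degA A u = δ), MvPolynomial.monomial u (p.coeff u)

/-- An ideal of `R_A` is `ℤ^d`-graded if it contains all homogeneous components of its
elements. -/
def IsGradedIdeal (A : Matrix (Fin d) (Fin n) ℤ) (J : Ideal (MvPolynomial (Fin n) ℂ)) :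
    Prop :=
  ∀ p ∈ J, ∀ δ : Fin d → ℤ, homogComponentA A δ p ∈ J

/-- The toric ideal of `A`. -/
noncomputable def toricIdeal (A : Matrix (Fin d) (Fin n) ℤ) :
    Ideal (MvPolynomial (Fin n) ℂ) :=
  RingHom.ker (MvPolynomial.aeval
      (fun j : Fin n => (AddMonoidAlgebra.single (fun i : Fin d => A i j) (1 : ℂ) :
        AddMonoidAlgebra ℂ (Fin d → ℤ))) :
      MvPolynomial (Fin n) ℂ →ₐ[ℂ] AddMonoidAlgebra ℂ (Fin d → ℤ)).toRingHom

/-- `F` (a set of column indices) is a prime face of `A`: the zero set on the columns of an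
integral linear functional nonnegative on all columns. -/
def IsPrimeFaceIdx (A : Matrix (Fin d) (Fin n) ℤ) (F : Finset (Fin n)) : Prop :=
  ∃ L : (Fin d → ℤ) →ₗ[ℤ] ℤ,
    (∀ k : Fin n, 0 ≤ L (fun i => A i k)) ∧
    (∀ k : Fin n, k ∈ F ↔ L (fun i => A i k) = 0)

/-- The toric ideal of the face `F` inside `R_F = ℂ[∂_k : k ∈ F]`. -/
noncomputable def faceToricIdeal (A : Matrix (Fin d) (Fin n) ℤ) (F : Finset (Fin n)) :
    Ideal (MvPolynomial {k : Fin n // k ∈ F} ℂ) :=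
  RingHom.ker (MvPolynomial.aeval
      (fun k : {k : Fin n // k ∈ F} =>
        (AddMonoidAlgebra.single (fun i : Fin d => A i k.1) (1 : ℂ) :
          AddMonoidAlgebra ℂ (Fin d → ℤ))) :
      MvPolynomial {k : Fin n // k ∈ F} ℂ →ₐ[ℂ] AddMonoidAlgebra ℂ (Fin d → ℤ)).toRingHom

/-- The ideal `I_A^F = ⟨∂_k : k ∉ F⟩ + R_A · I_F` of `R_A`. -/
noncomputable def facePrimeIdeal (A : Matrix (Fin d) (Fin n) ℤ) (F : Finset (Fin n)) :
    Ideal (MvPolynomial (Fin n) ℂ) :=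
  Ideal.span ((fun k : Fin n => (MvPolynomial.X k : MvPolynomial (Fin n) ℂ)) ''
      {k : Fin n | k ∉ F}) ⊔
    Ideal.map (MvPolynomial.rename (Subtype.val : {k : Fin n // k ∈ F} → Fin n))
      (faceToricIdeal A F)

noncomputable section

namespace ToricAux

variable {d : ℕ} {ι : Type*} [Fintype ι] [DecidableEq ι]

/-- sum of columns weighted by an exponent vector -/
def svec (v : ι → Fin d → ℤ) (u : ι →₀ ℕ) : Fin d → ℤ := ∑ j, (u j : ℤ) • v j

/-- monomial map sending off-face variables to 0 -/
def fmapF (v : ι → Fin d → ℤ) (F : Finset ι) :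
    MvPolynomial ι ℂ →ₐ[ℂ] AddMonoidAlgebra ℂ (Fin d → ℤ) :=
  aeval (fun j => if j ∈ F then AddMonoidAlgebra.single (v j) 1 else 0)

theorem fmapF_monomial (v : ι → Fin d → ℤ) (F : Finset ι) (u : ι →₀ ℕ) (c : ℂ) :
    fmapF v F (monomial u c) =
      if u.support ⊆ F then AddMonoidAlgebra.single (svec v u) c else 0 := by
  rw [fmapF, aeval_monomial, Finsupp.prod_fintype _ _ (fun j => pow_zero _)]
  by_cases hs : u.support ⊆ F
  · have h1 : ∀ j : ι,
        (if j ∈ F then AddMonoidAlgebra.single (v j) (1:ℂ) else 0) ^ (u j)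
          = AddMonoidAlgebra.single ((u j : ℤ) • v j) 1 := by
      intro j
      by_cases hj : j ∈ F
      · rw [if_pos hj, AddMonoidAlgebra.single_pow, one_pow, natCast_zsmul]
      · have hu : u j = 0 := Finsupp.notMem_support_iff.mp (fun h => hj (hs h))
        rw [if_neg hj, hu, pow_zero, AddMonoidAlgebra.one_def]
        norm_num
    rw [if_pos hs]
    simp only [h1]
    rw [AddMonoidAlgebra.prod_single, Finset.prod_const_one]
    have : algebraMap ℂ (AddMonoidAlgebra ℂ (Fin d → ℤ)) c = AddMonoidAlgebra.single 0 c := rfl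
    rw [this, AddMonoidAlgebra.single_mul_single, zero_add, mul_one, svec]
  · rw [if_neg hs]
    obtain ⟨j0, hj0u, hj0F⟩ := Finset.not_subset.mp hs
    have : (if j0 ∈ F then AddMonoidAlgebra.single (v j0) (1:ℂ) else 0) ^ (u j0) = 0 := by
      rw [if_neg hj0F, zero_pow (Finsupp.mem_support_iff.mp hj0u)]
    rw [Finset.prod_eq_zero (Finset.mem_univ j0) this, mul_zero]

/-- bucket sums: the sum of coefficients of monomials supported in `F` with weight `g` -/
def bucketF (v : ι → Fin d → ℤ) (F : Finset ι) (p : MvPolynomial ι ℂ) (g : Fin d → ℤ) : ℂ :=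
  ∑ u ∈ p.support, if u.support ⊆ F ∧ svec v u = g then coeff u p else 0

theorem fmapF_apply (v : ι → Fin d → ℤ) (F : Finset ι) (p : MvPolynomial ι ℂ) :
    fmapF v F p = ∑ u ∈ p.support,
      if u.support ⊆ F then AddMonoidAlgebra.single (svec v u) (coeff u p) else 0 := by
  conv_lhs => rw [← support_sum_monomial_coeff p]
  rw [map_sum]
  exact Finset.sum_congr rfl fun u _ => fmapF_monomial v F u (coeff u p)

theorem fmapF_coeff (v : ι → Fin d → ℤ) (F : Finset ι) (p : MvPolynomial ι ℂ)
    (g : Fin d → ℤ) : (fmapF v F p).coeff g = bucketF v F p g := by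
  rw [fmapF_apply, bucketF, AddMonoidAlgebra.coeff_sum, Finsupp.finset_sum_apply]
  refine Finset.sum_congr rfl fun u _ => ?_
  by_cases h1 : u.support ⊆ F
  · by_cases h2 : svec v u = g
    · simp [h1, h2, AddMonoidAlgebra.coeff_single, Finsupp.single_apply]
    · simp [h1, h2, AddMonoidAlgebra.coeff_single, Finsupp.single_apply]
  · simp [h1]

theorem fmapF_eq_zero_iff (v : ι → Fin d → ℤ) (F : Finset ι) (p : MvPolynomial ι ℂ) :
    fmapF v F p = 0 ↔ ∀ g, bucketF v F p g = 0 := by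
  constructor
  · intro h g
    rw [← fmapF_coeff, h]
    rfl
  · intro h
    apply AddMonoidAlgebra.ext
    apply Finsupp.ext
    intro g
    rw [fmapF_coeff]
    exact h g

theorem binomial_mem_ker (v : ι → Fin d → ℤ) {u u' : ι →₀ ℕ} (h : svec v u = svec v u') :
    monomial u (1:ℂ) - monomial u' 1 ∈ RingHom.ker (fmapF v Finset.univ).toRingHom := by
  rw [RingHom.mem_ker]
  show fmapF v Finset.univ _ = 0
  rw [map_sub, fmapF_monomial, fmapF_monomial, if_pos (Finset.subset_univ _),
    if_pos (Finset.subset_univ _), h, sub_self]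

end ToricAux
namespace ToricAux

variable {d n : ℕ}

def colsA (A : Matrix (Fin d) (Fin n) ℤ) : Fin n → Fin d → ℤ := fun j i => A i j

def colsF (A : Matrix (Fin d) (Fin n) ℤ) (F : Finset (Fin n)) :
    {k : Fin n // k ∈ F} → Fin d → ℤ := fun k i => A i k.1

theorem fmapF_univ {ι : Type*} [Fintype ι] [DecidableEq ι] (v : ι → Fin d → ℤ) :
    fmapF v Finset.univ
      = aeval (fun j => (AddMonoidAlgebra.single (v j) (1:ℂ) : AddMonoidAlgebra ℂ (Fin d → ℤ))) := by
  rw [fmapF]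
  congr 1
  funext j
  rw [if_pos (Finset.mem_univ j)]

theorem toricIdeal_eq (A : Matrix (Fin d) (Fin n) ℤ) :
    toricIdeal A = RingHom.ker (fmapF (colsA A) Finset.univ).toRingHom := by
  rw [toricIdeal, fmapF_univ]
  rfl

theorem faceToricIdeal_eq (A : Matrix (Fin d) (Fin n) ℤ) (F : Finset (Fin n)) :
    faceToricIdeal A F = RingHom.ker (fmapF (colsF A F) Finset.univ).toRingHom := by
  rw [faceToricIdeal, fmapF_univ]
  rfl

/-- the algebra map killing off-face variables -/
def killF (F : Finset (Fin n)) :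
    MvPolynomial (Fin n) ℂ →ₐ[ℂ] MvPolynomial {k : Fin n // k ∈ F} ℂ :=
  aeval (fun k => if h : k ∈ F then X ⟨k, h⟩ else 0)

theorem killF_rename (F : Finset (Fin n)) (q : MvPolynomial {k : Fin n // k ∈ F} ℂ) :
    killF F (rename (Subtype.val) q) = q := by
  rw [killF, aeval_rename]
  have h : ((fun k : Fin n => if h : k ∈ F then (X ⟨k, h⟩ : MvPolynomial {k : Fin n // k ∈ F} ℂ) else 0)
      ∘ (Subtype.val)) = X := by
    funext k
    simp only [Function.comp_apply, dif_pos k.2]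
  rw [h, aeval_X_left_apply]

theorem killF_surjective (F : Finset (Fin n)) : Function.Surjective (killF F (n := n)) :=
  fun q => ⟨rename (Subtype.val) q, killF_rename F q⟩

theorem fmapF_comp_killF (A : Matrix (Fin d) (Fin n) ℤ) (F : Finset (Fin n)) :
    (fmapF (colsF A F) Finset.univ).comp (killF F) = fmapF (colsA A) F := by
  apply MvPolynomial.algHom_ext
  intro k
  rw [AlgHom.comp_apply, killF, aeval_X]
  by_cases hk : k ∈ F
  · rw [dif_pos hk, fmapF, fmapF, aeval_X, aeval_X, if_pos (Finset.mem_univ _), if_pos hk]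
    rfl
  · rw [dif_neg hk, map_zero, fmapF, aeval_X, if_neg hk]

theorem sub_rename_killF_mem_span (F : Finset (Fin n)) (p : MvPolynomial (Fin n) ℂ) :
    p - rename (Subtype.val) (killF F p) ∈
      Ideal.span ((fun k : Fin n => (MvPolynomial.X k : MvPolynomial (Fin n) ℂ)) '' {k | k ∉ F}) := by
  induction p using MvPolynomial.induction_on with
  | C a =>
      rw [show killF F (C a) = C a from aeval_C _ a, rename_C, sub_self]
      exact Ideal.zero_mem _
  | add p q hp hq =>
      rw [map_add, map_add]
      have h : p + q - (rename Subtype.val (killF F p) + rename Subtype.val (killF F q))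
          = (p - rename Subtype.val (killF F p)) + (q - rename Subtype.val (killF F q)) := by ring
      rw [h]
      exact Ideal.add_mem _ hp hq
  | mul_X p k hp =>
      rw [map_mul]
      by_cases hk : k ∈ F
      · rw [show killF F (X k) = X ⟨k, hk⟩ by rw [killF, aeval_X, dif_pos hk], map_mul, rename_X]
        have h : p * X k - rename Subtype.val (killF F p) * X k
            = (p - rename Subtype.val (killF F p)) * X k := by ring
        rw [h]
        exact Ideal.mul_mem_right _ _ hp
      · rw [show killF F (X k) = 0 by rw [killF, aeval_X, dif_neg hk], mul_zero, map_zero, sub_zero]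
        exact Ideal.mul_mem_left _ _ (Ideal.subset_span ⟨k, hk, rfl⟩)

theorem facePrime_eq_ker (A : Matrix (Fin d) (Fin n) ℤ) (F : Finset (Fin n)) :
    facePrimeIdeal A F = RingHom.ker (fmapF (colsA A) F).toRingHom := by
  apply le_antisymm
  · rw [facePrimeIdeal]
    apply sup_le
    · rw [Ideal.span_le]
      rintro x ⟨k, hk, rfl⟩
      rw [SetLike.mem_coe, RingHom.mem_ker]
      show fmapF (colsA A) F (X k) = 0
      rw [fmapF, aeval_X, if_neg hk]
    · rw [Ideal.map_le_iff_le_comap]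
      intro q hq
      rw [Ideal.mem_comap, RingHom.mem_ker]
      show fmapF (colsA A) F (rename Subtype.val q) = 0
      have h1 : fmapF (colsA A) F (rename Subtype.val q)
          = fmapF (colsF A F) Finset.univ (killF F (rename Subtype.val q)) := by
        rw [← fmapF_comp_killF A F]; rfl
      rw [h1, killF_rename]
      have h2 : q ∈ RingHom.ker (fmapF (colsF A F) Finset.univ).toRingHom :=
        (faceToricIdeal_eq A F) ▸ hq
      exact h2
  · intro p hp
    have key := sub_rename_killF_mem_span F p
    have h2 : killF F p ∈ faceToricIdeal A F := by
      rw [faceToricIdeal_eq, RingHom.mem_ker]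
      show fmapF (colsF A F) Finset.univ (killF F p) = 0
      rw [← AlgHom.comp_apply, fmapF_comp_killF]
      exact hp
    have h3 : rename (Subtype.val) (killF F p) ∈ facePrimeIdeal A F :=
      le_sup_right (α := Ideal (MvPolynomial (Fin n) ℂ)) (Ideal.mem_map_of_mem _ h2)
    have h4 : p - rename (Subtype.val) (killF F p) ∈ facePrimeIdeal A F := le_sup_left (α := Ideal (MvPolynomial (Fin n) ℂ)) key
    have := Ideal.add_mem _ h4 h3
    rwa [sub_add_cancel] at this

theorem facePrime_isPrime (A : Matrix (Fin d) (Fin n) ℤ) (F : Finset (Fin n)) :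
    (facePrimeIdeal A F).IsPrime := by
  rw [facePrime_eq_ker]
  haveI : IsDomain (AddMonoidAlgebra ℂ (Fin d → ℤ)) := NoZeroDivisors.to_isDomain _
  exact RingHom.ker_isPrime _

theorem quotient_iso (A : Matrix (Fin d) (Fin n) ℤ) (F : Finset (Fin n)) :
    Nonempty ((MvPolynomial (Fin n) ℂ ⧸ facePrimeIdeal A F) ≃+*
      (MvPolynomial {k : Fin n // k ∈ F} ℂ ⧸ faceToricIdeal A F)) := by
  let f : MvPolynomial (Fin n) ℂ →+* MvPolynomial {k : Fin n // k ∈ F} ℂ ⧸ faceToricIdeal A F :=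
    (Ideal.Quotient.mk (faceToricIdeal A F)).comp (killF F).toRingHom
  have hsurj : Function.Surjective f := by
    rw [show (⇑f) = (⇑(Ideal.Quotient.mk (faceToricIdeal A F)) ∘ ⇑(killF F)) from rfl]
    exact Ideal.Quotient.mk_surjective.comp (killF_surjective F)
  have hker : RingHom.ker f = facePrimeIdeal A F := by
    ext p
    rw [RingHom.mem_ker, facePrime_eq_ker, RingHom.mem_ker]
    show Ideal.Quotient.mk _ (killF F p) = 0 ↔ _
    rw [Ideal.Quotient.eq_zero_iff_mem, faceToricIdeal_eq, RingHom.mem_ker]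
    show fmapF (colsF A F) Finset.univ (killF F p) = 0 ↔ _
    rw [← AlgHom.comp_apply, fmapF_comp_killF]
    rfl
  exact ⟨(Ideal.quotEquivOfEq hker.symm).trans (RingHom.quotientKerEquivOfSurjective hsurj)⟩

end ToricAux
namespace ToricAux

variable {d n : ℕ}

theorem degA_eq (A : Matrix (Fin d) (Fin n) ℤ) (u : Fin n →₀ ℕ) :
    degA A u = - svec (colsA A) u := by
  funext i
  simp only [degA, svec, Pi.neg_apply, Finset.sum_apply, Pi.smul_apply, smul_eq_mul, colsA,
    neg_inj]
  exact Finset.sum_congr rfl fun j _ => mul_comm _ _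

theorem L_svec (A : Matrix (Fin d) (Fin n) ℤ) (L : (Fin d → ℤ) →ₗ[ℤ] ℤ) (u : Fin n →₀ ℕ) :
    L (svec (colsA A) u) = ∑ j, (u j : ℤ) * L (colsA A j) := by
  rw [svec, map_sum]
  exact Finset.sum_congr rfl fun j _ => by rw [map_smul, smul_eq_mul]

theorem supp_subset_iff (A : Matrix (Fin d) (Fin n) ℤ) (F : Finset (Fin n))
    (L : (Fin d → ℤ) →ₗ[ℤ] ℤ) (h1 : ∀ k, 0 ≤ L (fun i => A i k))
    (h2 : ∀ k, k ∈ F ↔ L (fun i => A i k) = 0) (u : Fin n →₀ ℕ) :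
    u.support ⊆ F ↔ L (svec (colsA A) u) = 0 := by
  have h1' : ∀ k, 0 ≤ L (colsA A k) := h1
  have h2' : ∀ k, k ∈ F ↔ L (colsA A k) = 0 := h2
  rw [L_svec]
  have hnn : ∀ j ∈ Finset.univ, 0 ≤ (u j : ℤ) * L (colsA A j) :=
    fun j _ => mul_nonneg (Int.natCast_nonneg _) (h1' j)
  constructor
  · intro hsub
    apply Finset.sum_eq_zero
    intro j _
    by_cases hj : u j = 0
    · rw [hj]; simp
    · have : j ∈ F := hsub (Finsupp.mem_support_iff.mpr hj)
      rw [(h2' j).mp this, mul_zero]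
  · intro hsum j hj
    have := (Finset.sum_eq_zero_iff_of_nonneg hnn).mp hsum j (Finset.mem_univ j)
    rcases mul_eq_zero.mp this with h | h
    · exact absurd (by exact_mod_cast h) (Finsupp.mem_support_iff.mp hj)
    · exact (h2' j).mpr h

theorem toric_le_ker (A : Matrix (Fin d) (Fin n) ℤ) (F : Finset (Fin n))
    (L : (Fin d → ℤ) →ₗ[ℤ] ℤ) (h1 : ∀ k, 0 ≤ L (fun i => A i k))
    (h2 : ∀ k, k ∈ F ↔ L (fun i => A i k) = 0) :
    toricIdeal A ≤ RingHom.ker (fmapF (colsA A) F).toRingHom := by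
  rw [toricIdeal_eq]
  intro p hp
  rw [RingHom.mem_ker] at hp ⊢
  have hp' : ∀ g, bucketF (colsA A) Finset.univ p g = 0 :=
    (fmapF_eq_zero_iff _ _ _).mp hp
  show fmapF (colsA A) F p = 0
  rw [fmapF_eq_zero_iff]
  intro g
  classical
  by_cases hg : L g = 0
  · have : bucketF (colsA A) F p g = bucketF (colsA A) Finset.univ p g := by
      rw [bucketF, bucketF]
      refine Finset.sum_congr rfl fun u _ => ?_
      by_cases h : svec (colsA A) u = g
      · have hsub : u.support ⊆ F := (supp_subset_iff A F L h1 h2 u).mpr (by rw [h]; exact hg)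
        simp [h, hsub]
      · simp [h]
    rw [this]; exact hp' g
  · rw [bucketF]
    apply Finset.sum_eq_zero
    intro u _
    rw [if_neg]
    rintro ⟨hsub, hsvec⟩
    exact hg (hsvec ▸ (supp_subset_iff A F L h1 h2 u).mp hsub)

theorem homog_eq (A : Matrix (Fin d) (Fin n) ℤ) (δ : Fin d → ℤ) (p : MvPolynomial (Fin n) ℂ) :
    homogComponentA A δ p
      = ∑ u ∈ p.support.filter (fun u => degA A u = δ), monomial u (coeff u p) := by
  rw [homogComponentA]
  rw [Finset.filter_congr_decidable]

theorem coeff_homog (A : Matrix (Fin d) (Fin n) ℤ) (δ : Fin d → ℤ) (p : MvPolynomial (Fin n) ℂ)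
    (v0 : Fin n →₀ ℕ) :
    coeff v0 (homogComponentA A δ p) = if degA A v0 = δ then coeff v0 p else 0 := by
  rw [homog_eq, MvPolynomial.coeff_sum]
  simp_rw [coeff_monomial]
  rw [Finset.sum_ite_eq' _ v0 (fun u => coeff u p)]
  by_cases h : degA A v0 = δ
  · rw [if_pos h]
    by_cases hs : v0 ∈ p.support
    · rw [if_pos (Finset.mem_filter.mpr ⟨hs, h⟩)]
    · rw [if_neg (fun hmem => hs (Finset.mem_filter.mp hmem).1),
        MvPolynomial.notMem_support_iff.mp hs]
  · rw [if_neg h]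
    exact if_neg (fun hmem : v0 ∈ p.support.filter (fun u => degA A u = δ) =>
      h (Finset.mem_filter.mp hmem).2)

theorem support_homog_subset (A : Matrix (Fin d) (Fin n) ℤ) (δ : Fin d → ℤ)
    (p : MvPolynomial (Fin n) ℂ) :
    (homogComponentA A δ p).support ⊆ p.support := by
  intro u hu
  rw [MvPolynomial.mem_support_iff] at hu ⊢
  intro h
  apply hu
  rw [coeff_homog, h]
  split_ifs <;> rfl

theorem graded_ker (A : Matrix (Fin d) (Fin n) ℤ) (F : Finset (Fin n)) :
    IsGradedIdeal A (RingHom.ker (fmapF (colsA A) F).toRingHom) := by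
  intro p hp δ
  rw [RingHom.mem_ker] at hp ⊢
  have hp' : ∀ g, bucketF (colsA A) F p g = 0 := (fmapF_eq_zero_iff _ _ _).mp hp
  show fmapF (colsA A) F (homogComponentA A δ p) = 0
  rw [fmapF_eq_zero_iff]
  intro g
  rw [bucketF]
  rw [Finset.sum_subset (support_homog_subset A δ p) (fun u _ hu => by
    rw [MvPolynomial.notMem_support_iff.mp hu]
    split_ifs <;> rfl)]
  have step : (∑ u ∈ p.support,
        if u.support ⊆ F ∧ svec (colsA A) u = g then coeff u (homogComponentA A δ p) else 0)
      = ∑ u ∈ p.support, if u.support ⊆ F ∧ svec (colsA A) u = g then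
          (if degA A u = δ then coeff u p else 0) else 0 :=
    Finset.sum_congr rfl fun u _ => by rw [coeff_homog]
  rw [step]
  by_cases hgδ : δ = -g
  · have step2 : (∑ u ∈ p.support, if u.support ⊆ F ∧ svec (colsA A) u = g then
          (if degA A u = δ then coeff u p else 0) else 0)
        = ∑ u ∈ p.support, if u.support ⊆ F ∧ svec (colsA A) u = g then coeff u p else 0 := by
      refine Finset.sum_congr rfl fun u _ => ?_
      by_cases hc : u.support ⊆ F ∧ svec (colsA A) u = g
      · rw [if_pos hc, if_pos hc, if_pos (by rw [degA_eq, hc.2, hgδ])]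
      · rw [if_neg hc, if_neg hc]
    rw [step2]
    exact hp' g
  · apply Finset.sum_eq_zero
    intro u _
    by_cases hc : u.support ⊆ F ∧ svec (colsA A) u = g
    · rw [if_pos hc, if_neg (fun h => hgδ (by rw [← h, degA_eq, hc.2]))]
    · rw [if_neg hc]

theorem toric_le_facePrime (A : Matrix (Fin d) (Fin n) ℤ) (F : Finset (Fin n))
    (L : (Fin d → ℤ) →ₗ[ℤ] ℤ) (h1 : ∀ k, 0 ≤ L (fun i => A i k))
    (h2 : ∀ k, k ∈ F ↔ L (fun i => A i k) = 0) :
    toricIdeal A ≤ facePrimeIdeal A F := by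
  rw [facePrime_eq_ker]
  exact toric_le_ker A F L h1 h2

theorem graded_facePrime (A : Matrix (Fin d) (Fin n) ℤ) (F : Finset (Fin n)) :
    IsGradedIdeal A (facePrimeIdeal A F) := by
  rw [facePrime_eq_ker]
  exact graded_ker A F

end ToricAux

namespace ToricAux

theorem map_rename_face_le {d n : ℕ} (A : Matrix (Fin d) (Fin n) ℤ) (F : Finset (Fin n)) :
    Ideal.map (MvPolynomial.rename (Subtype.val : {k : Fin n // k ∈ F} → Fin n))
      (faceToricIdeal A F) ≤ toricIdeal A := by
  rw [faceToricIdeal_eq, toricIdeal_eq, Ideal.map_le_iff_le_comap]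
  intro q hq
  rw [RingHom.mem_ker] at hq
  rw [Ideal.mem_comap, RingHom.mem_ker]
  show fmapF (colsA A) Finset.univ (MvPolynomial.rename Subtype.val q) = 0
  rw [fmapF_univ, MvPolynomial.aeval_rename]
  have h : ((fun j : Fin n => (AddMonoidAlgebra.single (colsA A j) (1:ℂ) :
      AddMonoidAlgebra ℂ (Fin d → ℤ))) ∘ (Subtype.val : {k : Fin n // k ∈ F} → Fin n))
      = fun k : {k : Fin n // k ∈ F} => AddMonoidAlgebra.single (colsF A F k) (1:ℂ) := by
    funext k
    rfl
  rw [h]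
  rw [fmapF_univ] at hq
  exact hq

end ToricAux
namespace ToricAux

section LinSys

variable {ι : Type*} [Fintype ι] [DecidableEq ι]

def Solves (l : List ((ι → ℚ) × ℚ)) (q : ι → ℚ) : Prop :=
  ∀ c ∈ l, ∑ j, c.1 j * q j = c.2

def SolvesR (l : List ((ι → ℚ) × ℚ)) (x : ι → ℝ) : Prop :=
  ∀ c ∈ l, ∑ j, (c.1 j : ℝ) * x j = (c.2 : ℝ)

theorem sum_mul_update (g q' : ι → ℚ) (j0 : ι) (val : ℚ) :
    ∑ j, g j * (Function.update q' j0 val) j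
      = g j0 * val + ∑ j ∈ Finset.univ.erase j0, g j * q' j := by
  rw [← Finset.add_sum_erase _ _ (Finset.mem_univ j0), Function.update_self]
  congr 1
  exact Finset.sum_congr rfl fun j hj => by
    rw [Function.update_of_ne (Finset.ne_of_mem_erase hj)]

theorem ratSolution_aux : ∀ (N : ℕ) (l : List ((ι → ℚ) × ℚ)), l.length = N →
    ∀ x : ι → ℝ, SolvesR l x → ∃ q : ι → ℚ, Solves l q := by
  intro N
  induction N with
  | zero =>
      intro l hl x _
      rw [List.length_eq_zero_iff] at hl
      subst hl
      exact ⟨0, fun c hc => absurd hc List.not_mem_nil⟩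
  | succ N ih =>
      intro l hl x hx
      match l, hl with
      | (r, b) :: t, hl =>
        have hlt : t.length = N := by simpa using hl
        by_cases hr : r = 0
        · -- degenerate first row
          have hb : (b : ℝ) = 0 := by
            have := hx (r, b) List.mem_cons_self
            simp [hr] at this
            exact this.symm
          have hb' : b = 0 := by exact_mod_cast hb
          obtain ⟨q, hq⟩ := ih t hlt x (fun c hc => hx c (List.mem_cons_of_mem _ hc))
          refine ⟨q, fun c hc => ?_⟩
          rcases List.mem_cons.mp hc with h | h
          · rw [h]
            simp [hr, hb']
          · exact hq c h
        · obtain ⟨j0, hj0⟩ : ∃ j0, r j0 ≠ 0 := by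
            by_contra h
            push_neg at h
            exact hr (funext h)
          set α : ((ι → ℚ) × ℚ) → ℚ := fun c => c.1 j0 / r j0 with hα
          set t' : List ((ι → ℚ) × ℚ) :=
            t.map (fun c => (c.1 - α c • r, c.2 - α c * b)) with ht'
          have hhead : ∑ j, (r j : ℝ) * x j = (b : ℝ) := hx (r, b) List.mem_cons_self
          have hx' : SolvesR t' x := by
            intro c' hc'
            obtain ⟨c, hc, rfl⟩ := List.mem_map.mp hc'
            have htail := hx c (List.mem_cons_of_mem _ hc)
            have hterm : ∀ j, (((c.1 - α c • r) j : ℚ) : ℝ) * x j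
                = (c.1 j : ℝ) * x j - ((α c : ℚ) : ℝ) * ((r j : ℝ) * x j) := by
              intro j
              simp only [Pi.sub_apply, Pi.smul_apply, smul_eq_mul]
              push_cast
              ring
            rw [show ((c.1 - α c • r, c.2 - α c * b) : (ι → ℚ) × ℚ).1 = c.1 - α c • r from rfl]
            rw [Finset.sum_congr rfl (fun j _ => hterm j), Finset.sum_sub_distrib,
              ← Finset.mul_sum, hhead, htail]
            push_cast
            ring
          have hlt' : t'.length = N := by simp [ht', hlt]
          obtain ⟨q', hq'⟩ := ih t' hlt' x hx'
          set val : ℚ := (b - ∑ j ∈ Finset.univ.erase j0, r j * q' j) / r j0 with hval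
          set q : ι → ℚ := Function.update q' j0 val with hqdef
          have hheadq : ∑ j, r j * q j = b := by
            rw [hqdef, sum_mul_update, hval]
            field_simp
            ring
          refine ⟨q, fun c hc => ?_⟩
          rcases List.mem_cons.mp hc with h | h
          · rw [h]; exact hheadq
          · -- tail constraint
            have hmem : (c.1 - α c • r, c.2 - α c * b) ∈ t' := by
              rw [ht']
              exact List.mem_map_of_mem h
            have htr := hq' _ hmem
            have h0 : (c.1 - α c • r) j0 = 0 := by
              simp only [Pi.sub_apply, Pi.smul_apply, smul_eq_mul, hα]
              field_simp
              ring
            have hc'q : ∑ j, (c.1 - α c • r) j * q j = c.2 - α c * b := by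
              rw [hqdef, sum_mul_update, h0, zero_mul, zero_add]
              rw [show (∑ j, (c.1 - α c • r) j * q' j)
                  = (c.1 - α c • r) j0 * q' j0 + ∑ j ∈ Finset.univ.erase j0,
                    (c.1 - α c • r) j * q' j from
                (Finset.add_sum_erase _ _ (Finset.mem_univ j0)).symm, h0, zero_mul, zero_add]
                at htr
              exact htr
            have expand : ∑ j, c.1 j * q j
                = (∑ j, (c.1 - α c • r) j * q j) + α c * ∑ j, r j * q j := by
              rw [Finset.mul_sum, ← Finset.sum_add_distrib]
              refine Finset.sum_congr rfl fun j _ => ?_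
              simp only [Pi.sub_apply, Pi.smul_apply, smul_eq_mul]
              ring
            rw [expand, hc'q, hheadq]
            ring

theorem ratSolution (l : List ((ι → ℚ) × ℚ)) (x : ι → ℝ) (hx : SolvesR l x) :
    ∃ q : ι → ℚ, Solves l q :=
  ratSolution_aux l.length l rfl x hx

end LinSys

end ToricAux
namespace ToricAux

section LinSys2

variable {ι : Type*} [Fintype ι] [DecidableEq ι]

open Finset

theorem nonnegSolution_aux : ∀ (m : ℕ) (x : ι → ℝ),
    (Finset.univ.filter (fun j => x j ≠ 0)).card ≤ m → (∀ j, 0 ≤ x j) →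
    ∀ l : List ((ι → ℚ) × ℚ), SolvesR l x →
    ∃ q : ι → ℚ, (∀ j, 0 ≤ q j) ∧ Solves l q := by
  classical
  intro m
  induction m with
  | zero =>
      intro x hcard hx0 l hx
      have hx00 : ∀ j, x j = 0 := by
        intro j
        by_contra h
        have : j ∈ Finset.univ.filter (fun j => x j ≠ 0) := by
          simp [h]
        have := Finset.card_pos.mpr ⟨j, this⟩
        omega
      refine ⟨0, fun j => le_refl 0, fun c hc => ?_⟩
      have := hx c hc
      simp only [hx00, mul_zero, Finset.sum_const_zero] at this
      have : c.2 = 0 := by exact_mod_cast this.symm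
      simp [this]
  | succ m ih =>
      intro x hcard hx0 l hx
      -- extend system with rows forcing q j = 0 whenever x j = 0
      set zrows : List ((ι → ℚ) × ℚ) :=
        ((Finset.univ.filter (fun j => x j = 0)).toList).map
          (fun j => ((fun j' => if j' = j then (1:ℚ) else 0), (0:ℚ))) with hzrows
      have hx2 : SolvesR (l ++ zrows) x := by
        intro c hc
        rcases List.mem_append.mp hc with h | h
        · exact hx c h
        · obtain ⟨j, hj, rfl⟩ := List.mem_map.mp h
          have hxj : x j = 0 := by
            have := Finset.mem_toList.mp hj
            exact (Finset.mem_filter.mp this).2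
          have : ∀ j' : ι, (((if j' = j then (1:ℚ) else 0) : ℚ) : ℝ) * x j'
              = if j' = j then x j' else 0 := by
            intro j'
            split_ifs <;> simp
          rw [Finset.sum_congr rfl (fun j' _ => this j')]
          rw [Finset.sum_ite_eq' Finset.univ j (fun j' => x j')]
          simp [hxj]
      obtain ⟨q, hq⟩ := ratSolution _ x hx2
      have hq0 : ∀ j, x j = 0 → q j = 0 := by
        intro j hxj
        have hjmem : ((fun j' => if j' = j then (1:ℚ) else 0), (0:ℚ)) ∈ zrows := by
          rw [hzrows]
          exact List.mem_map_of_mem (Finset.mem_toList.mpr (by simp [hxj]))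
        have := hq _ (List.mem_append_right _ hjmem)
        simp only at this
        rw [Finset.sum_congr rfl (fun j' _ => show (if j' = j then (1:ℚ) else 0) * q j'
            = if j' = j then q j' else 0 by split_ifs <;> simp)] at this
        rw [Finset.sum_ite_eq' Finset.univ j (fun j' => q j')] at this
        simpa using this
      by_cases hqn : ∀ j, 0 ≤ q j
      · exact ⟨q, hqn, fun c hc => hq c (List.mem_append_left _ hc)⟩
      push_neg at hqn
      obtain ⟨j1, hj1⟩ := hqn
      set K : Finset ι := Finset.univ.filter (fun j => q j < 0) with hK
      have hKne : K.Nonempty := ⟨j1, by simp [hK, hj1]⟩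
      have hKx : ∀ j ∈ K, 0 < x j := by
        intro j hj
        have hqj : q j < 0 := (Finset.mem_filter.mp hj).2
        rcases lt_or_eq_of_le (hx0 j) with h | h
        · exact h
        · exact absurd (hq0 j h.symm) (ne_of_lt hqj)
      have hKd : ∀ j ∈ K, (0:ℝ) < x j - (q j : ℝ) := by
        intro j hj
        have hqj : q j < 0 := (Finset.mem_filter.mp hj).2
        have : ((q j : ℝ)) < 0 := by exact_mod_cast hqj
        linarith [hKx j hj]
      set ratio : ι → ℝ := fun j => x j / (x j - (q j : ℝ)) with hratio
      obtain ⟨jb, hjbK, hjbmin⟩ := Finset.exists_min_image K ratio hKne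
      set tb : ℝ := ratio jb with htb
      have htb0 : 0 < tb := div_pos (hKx jb hjbK) (hKd jb hjbK)
      have htb1 : tb ≤ 1 := by
        rw [htb, hratio]
        rw [div_le_one (hKd jb hjbK)]
        have : (q jb : ℝ) < 0 := by exact_mod_cast (Finset.mem_filter.mp hjbK).2
        linarith
      set y : ι → ℝ := fun j => x j + tb * ((q j : ℝ) - x j) with hy
      have hyzero : ∀ j, x j = 0 → y j = 0 := by
        intro j hxj
        have : q j = 0 := hq0 j hxj
        simp [hy, hxj, this]
      have hdjb : x jb - (q jb : ℝ) ≠ 0 := ne_of_gt (hKd jb hjbK)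
      have hyjb : y jb = 0 := by
        rw [hy]
        simp only
        rw [htb, hratio]
        field_simp
        ring
      have hy0 : ∀ j, 0 ≤ y j := by
        intro j
        by_cases hj : j ∈ K
        · have h1 : (q j : ℝ) - x j < 0 := by linarith [hKd j hj]
          have h2 : tb ≤ ratio j := hjbmin j hj
          have hdj : x j - (q j : ℝ) ≠ 0 := ne_of_gt (hKd j hj)
          have h3 : ratio j * ((q j : ℝ) - x j) = - x j := by
            rw [hratio]
            field_simp
            ring
          have h4 : tb * ((q j : ℝ) - x j) ≥ ratio j * ((q j : ℝ) - x j) :=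
            mul_le_mul_of_nonpos_right h2 (le_of_lt h1)
          rw [hy]
          simp only
          rw [h3] at h4
          linarith
        · have hqj : 0 ≤ q j := by
            by_contra h
            exact hj (by simp [hK]; linarith)
          have hqj' : (0:ℝ) ≤ (q j : ℝ) := by exact_mod_cast hqj
          have : y j = (1 - tb) * x j + tb * (q j : ℝ) := by rw [hy]; ring
          rw [this]
          have := hx0 j
          nlinarith
      have hyl : SolvesR l y := by
        intro c hc
        have h1 := hx c hc
        have h2 : ∑ j, (c.1 j : ℝ) * (q j : ℝ) = (c.2 : ℝ) := by
          have := hq c (List.mem_append_left _ hc)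
          exact_mod_cast this
        have hterm : ∀ j, (c.1 j : ℝ) * y j
            = (c.1 j : ℝ) * x j + tb * ((c.1 j : ℝ) * (q j : ℝ))
              - tb * ((c.1 j : ℝ) * x j) := by
          intro j
          rw [hy]
          ring
        rw [Finset.sum_congr rfl (fun j _ => hterm j), Finset.sum_sub_distrib,
          Finset.sum_add_distrib, ← Finset.mul_sum, ← Finset.mul_sum, h1, h2]
        ring
      -- support decreased
      have hxjb : x jb ≠ 0 := ne_of_gt (hKx jb hjbK)
      have hsub : Finset.univ.filter (fun j => y j ≠ 0)
          ⊆ (Finset.univ.filter (fun j => x j ≠ 0)).erase jb := by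
        intro j hj
        have hyj : y j ≠ 0 := (Finset.mem_filter.mp hj).2
        refine Finset.mem_erase.mpr ⟨?_, ?_⟩
        · intro h
          exact hyj (h ▸ hyjb)
        · refine Finset.mem_filter.mpr ⟨Finset.mem_univ _, ?_⟩
          intro h
          exact hyj (hyzero j h)
      have hcard' : (Finset.univ.filter (fun j => y j ≠ 0)).card ≤ m := by
        have h1 := Finset.card_le_card hsub
        have h2 := Finset.card_erase_of_mem
          (s := Finset.univ.filter (fun j => x j ≠ 0)) (a := jb)
          (Finset.mem_filter.mpr ⟨Finset.mem_univ _, hxjb⟩)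
        omega
      exact ih y hcard' hy0 l hyl

theorem nonnegSolution (l : List ((ι → ℚ) × ℚ)) (x : ι → ℝ) (hx0 : ∀ j, 0 ≤ x j)
    (hx : SolvesR l x) : ∃ q : ι → ℚ, (∀ j, 0 ≤ q j) ∧ Solves l q := by
  classical
  exact nonnegSolution_aux (Finset.univ.filter (fun j => x j ≠ 0)).card x le_rfl hx0 l hx

end LinSys2

end ToricAux
namespace ToricAux

section Gordan

open Finset

variable {d n : ℕ}

theorem exists_face_functional (a : Fin n → (Fin d → ℚ)) (F : Finset (Fin n))
    (Hq : ∀ lam : Fin n → ℚ, (∀ k, k ∉ F → 0 ≤ lam k) → (∑ k, lam k • a k) = 0 →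
      ∀ k, k ∉ F → lam k = 0) :
    ∃ L : Fin d → ℚ, (∀ j ∈ F, ∑ i, L i * a j i = 0) ∧
      (∀ k, k ∉ F → 0 < ∑ i, L i * a k i) := by
  classical
  by_cases hall : ∀ k, k ∈ F
  · exact ⟨0, fun j _ => by simp, fun k hk => absurd (hall k) hk⟩
  push_neg at hall
  obtain ⟨k0, hk0⟩ := hall
  set aR : Fin n → (Fin d → ℝ) := fun k i => ((a k i : ℚ) : ℝ) with haR
  set W : Submodule ℝ (Fin d → ℝ) := Submodule.span ℝ (aR '' {j | j ∈ F}) with hW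
  set S : Set (Fin d → ℝ) := aR '' {k | k ∉ F} with hS
  set K : Set (Fin d → ℝ) := convexHull ℝ S with hKdef
  -- Step 1 : disjointness of K and W
  have hdisj : Disjoint K (W : Set (Fin d → ℝ)) := by
    rw [Set.disjoint_left]
    intro x hxK hxW
    -- convex combination weights
    rw [hKdef, _root_.convexHull_eq] at hxK
    obtain ⟨ι', t, w, z, hw0, hw1, hzS, hcm⟩ := hxK
    have hz' : ∀ i : {i // i ∈ t}, ∃ k, k ∉ F ∧ aR k = z i.1 := by
      intro i
      obtain ⟨k, hk, he⟩ := hzS i.1 i.2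
      exact ⟨k, hk, he⟩
    choose κ hκ1 hκ2 using hz'
    set lamR : Fin n → ℝ := fun k => ∑ i ∈ t.attach, if κ i = k then w i.1 else 0 with hlamR
    have hlam0 : ∀ k, 0 ≤ lamR k := by
      intro k
      apply Finset.sum_nonneg
      intro i _
      split_ifs
      · exact hw0 i.1 i.2
      · exact le_refl 0
    have hlamF : ∀ k ∈ F, lamR k = 0 := by
      intro k hk
      apply Finset.sum_eq_zero
      intro i _
      rw [if_neg]
      intro h
      exact hκ1 i (h ▸ hk)
    have hlamsum : ∑ k, lamR k = 1 := by
      rw [hlamR]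
      rw [Finset.sum_comm]
      rw [← hw1, ← Finset.sum_attach t w]
      refine Finset.sum_congr rfl fun i _ => ?_
      rw [Finset.sum_ite_eq Finset.univ (κ i) (fun _ => w i.1)]
      simp
    have hlamx : ∑ k, lamR k • aR k = x := by
      rw [hlamR]
      have step : ∀ k, (∑ i ∈ t.attach, if κ i = k then w i.1 else 0) • aR k
          = ∑ i ∈ t.attach, if κ i = k then w i.1 • aR k else 0 := by
        intro k
        rw [Finset.sum_smul]
        exact Finset.sum_congr rfl fun i _ => by split_ifs <;> simp
      rw [Finset.sum_congr rfl fun k _ => step k, Finset.sum_comm]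
      have step2 : ∀ i ∈ t.attach, (∑ k, if κ i = k then w i.1 • aR k else 0)
          = w i.1 • z i.1 := by
        intro i _
        rw [Finset.sum_ite_eq Finset.univ (κ i) (fun k => w i.1 • aR k)]
        simp [hκ2 i]
      rw [Finset.sum_congr rfl step2, Finset.sum_attach t (fun i => w i • z i)]
      rw [← Finset.centerMass_eq_of_sum_1 t z hw1]
      exact hcm
    -- span coefficients
    have hxW' : x ∈ Submodule.span ℝ (aR '' {j | j ∈ F}) := hxW
    rw [Submodule.mem_span_set'] at hxW'
    obtain ⟨m, f, g, hfg⟩ := hxW'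
    have hg' : ∀ i : Fin m, ∃ j, j ∈ F ∧ aR j = (g i : Fin d → ℝ) := by
      intro i
      obtain ⟨j, hj, he⟩ := (g i).2
      exact ⟨j, hj, he⟩
    choose ϑ hϑ1 hϑ2 using hg'
    set muR : Fin n → ℝ := fun j => ∑ i, if ϑ i = j then f i else 0 with hmuR
    have hmux : ∑ j, muR j • aR j = x := by
      rw [hmuR]
      have step : ∀ j, (∑ i, if ϑ i = j then f i else 0) • aR j
          = ∑ i, if ϑ i = j then f i • aR j else 0 := by
        intro j
        rw [Finset.sum_smul]
        exact Finset.sum_congr rfl fun i _ => by split_ifs <;> simp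
      rw [Finset.sum_congr rfl fun j _ => step j, Finset.sum_comm]
      rw [← hfg]
      refine Finset.sum_congr rfl fun i _ => ?_
      rw [Finset.sum_ite_eq Finset.univ (ϑ i) (fun j => f i • aR j)]
      simp [hϑ2 i]
    have hmuRF : ∀ j, j ∉ F → muR j = 0 := by
      intro j hj
      apply Finset.sum_eq_zero
      intro i _
      rw [if_neg]
      intro h
      exact hj (h ▸ hϑ1 i)
    -- set up the linear system
    set muP : Fin n → ℝ := fun j => max (muR j) 0 with hmuP
    set muM : Fin n → ℝ := fun j => max (-(muR j)) 0 with hmuM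
    have hsplit : ∀ j, muP j - muM j = muR j := fun j =>
      max_zero_sub_max_neg_zero_eq_self (muR j)
    set rows1 : List ((Fin n ⊕ (Fin n ⊕ Fin n) → ℚ) × ℚ) :=
      (List.finRange d).map (fun i =>
        (Sum.elim (fun k => a k i) (Sum.elim (fun j => -(a j i)) (fun j => a j i)), 0)) with hrows1
    set row2 : (Fin n ⊕ (Fin n ⊕ Fin n) → ℚ) × ℚ :=
      (Sum.elim (fun _ => (1:ℚ)) (fun _ => 0), 1) with hrow2
    set rows3 : List ((Fin n ⊕ (Fin n ⊕ Fin n) → ℚ) × ℚ) :=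
      F.toList.map (fun k => (fun v => if v = Sum.inl k then (1:ℚ) else 0, 0)) with hrows3
    set rows4 : List ((Fin n ⊕ (Fin n ⊕ Fin n) → ℚ) × ℚ) :=
      (Fᶜ).toList.map (fun k => (fun v => if v = Sum.inr (Sum.inl k) then (1:ℚ) else 0, 0)) with hrows4
    set rows5 : List ((Fin n ⊕ (Fin n ⊕ Fin n) → ℚ) × ℚ) :=
      (Fᶜ).toList.map (fun k => (fun v => if v = Sum.inr (Sum.inr k) then (1:ℚ) else 0, 0)) with hrows5
    set xv : Fin n ⊕ (Fin n ⊕ Fin n) → ℝ := Sum.elim lamR (Sum.elim muP muM) with hxv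
    have hxv0 : ∀ v, 0 ≤ xv v := by
      rintro (k | j | j)
      · exact hlam0 k
      · exact le_max_right _ _
      · exact le_max_right _ _
    have hind : ∀ (v0 : Fin n ⊕ (Fin n ⊕ Fin n)) (yy : Fin n ⊕ (Fin n ⊕ Fin n) → ℝ),
        ∑ v, (((if v = v0 then (1:ℚ) else 0) : ℚ) : ℝ) * yy v = yy v0 := by
      intro v0 yy
      rw [Finset.sum_congr rfl (fun v _ => show (((if v = v0 then (1:ℚ) else 0) : ℚ) : ℝ) * yy v
          = if v = v0 then yy v else 0 by split_ifs <;> simp)]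
      rw [Finset.sum_ite_eq' Finset.univ v0 yy]
      simp
    have hsolv : SolvesR (rows1 ++ [row2] ++ rows3 ++ rows4 ++ rows5) xv := by
      intro c hc
      rcases List.mem_append.mp hc with hc' | hc5
      rcases List.mem_append.mp hc' with hc'' | hc4
      rcases List.mem_append.mp hc'' with hc''' | hc3
      rcases List.mem_append.mp hc''' with hc1 | hc2
      · -- rows1
        obtain ⟨i, _, rfl⟩ := List.mem_map.mp hc1
        simp only
        rw [Fintype.sum_sum_type, Fintype.sum_sum_type]
        simp only [Sum.elim_inl, Sum.elim_inr, hxv]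
        have e1 : ∑ j, ((-(a j i) : ℚ) : ℝ) * muP j + ∑ j, ((a j i : ℚ) : ℝ) * muM j
            = - ∑ j, muR j * aR j i := by
          rw [← Finset.sum_add_distrib, ← Finset.sum_neg_distrib]
          refine Finset.sum_congr rfl fun j _ => ?_
          rw [← hsplit j]
          push_cast
          simp only [haR]
          ring
        rw [e1]
        have e2 : ∑ k, ((a k i : ℚ) : ℝ) * lamR k = ∑ k, lamR k * aR k i := by
          refine Finset.sum_congr rfl fun k _ => ?_
          simp only [haR]
          ring
        rw [e2]
        have e3 : ∑ k, lamR k * aR k i = x i := by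
          have := congrFun hlamx i
          rw [Finset.sum_apply] at this
          simpa [Pi.smul_apply, smul_eq_mul] using this
        have e4 : ∑ j, muR j * aR j i = x i := by
          have := congrFun hmux i
          rw [Finset.sum_apply] at this
          simpa [Pi.smul_apply, smul_eq_mul] using this
        rw [e3, e4]
        simp
      · -- row2
        rw [List.mem_singleton.mp hc2, hrow2]
        simp only [hxv, Sum.elim_inl, Sum.elim_inr]
        rw [Fintype.sum_sum_type, Fintype.sum_sum_type]
        simp only [Sum.elim_inl, Sum.elim_inr]
        push_cast
        simp only [one_mul, zero_mul, Finset.sum_const_zero, add_zero]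
        exact hlamsum
      · -- rows3
        obtain ⟨k, hk, rfl⟩ := List.mem_map.mp hc3
        have hkF : k ∈ F := Finset.mem_toList.mp hk
        simp only
        rw [hind (Sum.inl k) xv]
        rw [hxv]
        simp only [Sum.elim_inl]
        exact_mod_cast hlamF k hkF
      · -- rows4
        obtain ⟨k, hk, rfl⟩ := List.mem_map.mp hc4
        have hkF : k ∉ F := Finset.mem_compl.mp (Finset.mem_toList.mp hk)
        simp only
        rw [hind (Sum.inr (Sum.inl k)) xv]
        rw [hxv]
        simp only [Sum.elim_inr, Sum.elim_inl]
        rw [hmuP]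
        simp only
        rw [hmuRF k hkF]
        simp
      · -- rows5
        obtain ⟨k, hk, rfl⟩ := List.mem_map.mp hc5
        have hkF : k ∉ F := Finset.mem_compl.mp (Finset.mem_toList.mp hk)
        simp only
        rw [hind (Sum.inr (Sum.inr k)) xv]
        rw [hxv]
        simp only [Sum.elim_inr]
        rw [hmuM]
        simp only
        rw [hmuRF k hkF]
        simp
    obtain ⟨qv, hqv0, hqv⟩ := nonnegSolution _ xv hxv0 hsolv
    set lamQ : Fin n → ℚ := fun k => qv (Sum.inl k) with hlamQ
    set muQ : Fin n → ℚ := fun j => qv (Sum.inr (Sum.inl j)) - qv (Sum.inr (Sum.inr j)) with hmuQ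
    have hindQ : ∀ (v0 : Fin n ⊕ (Fin n ⊕ Fin n)) (yy : Fin n ⊕ (Fin n ⊕ Fin n) → ℚ),
        ∑ v, (if v = v0 then (1:ℚ) else 0) * yy v = yy v0 := by
      intro v0 yy
      rw [Finset.sum_congr rfl (fun v _ => show (if v = v0 then (1:ℚ) else 0) * yy v
          = if v = v0 then yy v else 0 by split_ifs <;> simp)]
      rw [Finset.sum_ite_eq' Finset.univ v0 yy]
      simp
    have hlamQF : ∀ k ∈ F, lamQ k = 0 := by
      intro k hk
      have hmem : ((fun v => if v = Sum.inl k then (1:ℚ) else 0, (0:ℚ)))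
          ∈ rows1 ++ [row2] ++ rows3 ++ rows4 ++ rows5 := by
        apply List.mem_append_left
        apply List.mem_append_left
        apply List.mem_append_right
        rw [hrows3]
        exact List.mem_map_of_mem (Finset.mem_toList.mpr hk)
      have := hqv _ hmem
      simp only at this
      rw [hindQ (Sum.inl k) qv] at this
      exact this
    have hmuQ0 : ∀ k, k ∉ F → muQ k = 0 := by
      intro k hk
      have hmem4 : ((fun v => if v = Sum.inr (Sum.inl k) then (1:ℚ) else 0, (0:ℚ)))
          ∈ rows1 ++ [row2] ++ rows3 ++ rows4 ++ rows5 := by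
        apply List.mem_append_left
        apply List.mem_append_right
        rw [hrows4]
        exact List.mem_map_of_mem (Finset.mem_toList.mpr (Finset.mem_compl.mpr hk))
      have hmem5 : ((fun v => if v = Sum.inr (Sum.inr k) then (1:ℚ) else 0, (0:ℚ)))
          ∈ rows1 ++ [row2] ++ rows3 ++ rows4 ++ rows5 := by
        apply List.mem_append_right
        rw [hrows5]
        exact List.mem_map_of_mem (Finset.mem_toList.mpr (Finset.mem_compl.mpr hk))
      have h4 := hqv _ hmem4
      have h5 := hqv _ hmem5
      simp only at h4 h5
      rw [hindQ (Sum.inr (Sum.inl k)) qv] at h4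
      rw [hindQ (Sum.inr (Sum.inr k)) qv] at h5
      rw [hmuQ]
      simp only
      rw [h4, h5, sub_zero]
    have hsumQ : ∑ k, lamQ k = 1 := by
      have hmem : row2 ∈ rows1 ++ [row2] ++ rows3 ++ rows4 ++ rows5 := by
        apply List.mem_append_left
        apply List.mem_append_left
        apply List.mem_append_left
        apply List.mem_append_right
        simp
      have := hqv _ hmem
      rw [hrow2] at this
      simp only at this
      rw [Fintype.sum_sum_type] at this
      simp only [Sum.elim_inl, Sum.elim_inr, one_mul, zero_mul, Finset.sum_const_zero,
        add_zero] at this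
      exact this
    set Lam : Fin n → ℚ := fun k => lamQ k - muQ k with hLam
    have hLamrel : ∑ k, Lam k • a k = 0 := by
      funext i
      rw [Finset.sum_apply]
      have hmem : ((Sum.elim (fun k => a k i) (Sum.elim (fun j => -(a j i)) (fun j => a j i)),
          (0:ℚ))) ∈ rows1 ++ [row2] ++ rows3 ++ rows4 ++ rows5 := by
        apply List.mem_append_left
        apply List.mem_append_left
        apply List.mem_append_left
        apply List.mem_append_left
        rw [hrows1]
        exact List.mem_map_of_mem (List.mem_finRange i)
      have := hqv _ hmem
      simp only at this
      rw [Fintype.sum_sum_type, Fintype.sum_sum_type] at this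
      simp only [Sum.elim_inl, Sum.elim_inr] at this
      have e1 : ∑ j, -(a j i) * qv (Sum.inr (Sum.inl j)) + ∑ j, a j i * qv (Sum.inr (Sum.inr j))
          = - ∑ j, a j i * muQ j := by
        rw [← Finset.sum_add_distrib, ← Finset.sum_neg_distrib]
        refine Finset.sum_congr rfl fun j _ => ?_
        rw [hmuQ]
        ring
      rw [e1] at this
      have e2 : ∑ k, (Lam k • a k) i = ∑ k, a k i * lamQ k - ∑ j, a j i * muQ j := by
        rw [← Finset.sum_sub_distrib]
        refine Finset.sum_congr rfl fun k _ => ?_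
        simp only [Pi.smul_apply, smul_eq_mul, hLam]
        ring
      rw [e2]
      simp only [Pi.zero_apply]
      linarith [this]
    have hLamnn : ∀ k, k ∉ F → 0 ≤ Lam k := by
      intro k hk
      rw [hLam]
      simp only
      rw [hmuQ0 k hk, sub_zero]
      exact hqv0 (Sum.inl k)
    have hLam0 := Hq Lam hLamnn hLamrel
    have : ∑ k, lamQ k = 0 := by
      apply Finset.sum_eq_zero
      intro k _
      by_cases hk : k ∈ F
      · exact hlamQF k hk
      · have h1 := hLam0 k hk
        have h2 := hmuQ0 k hk
        rw [hLam] at h1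
        simp only at h1
        rw [h2, sub_zero] at h1
        exact h1
    rw [hsumQ] at this
    exact one_ne_zero this
  -- Step 2 : separation
  have hKconv : Convex ℝ K := convex_convexHull ℝ S
  have hKcomp : IsCompact K := (Set.toFinite S).isCompact_convexHull ℝ
  have hWconv : Convex ℝ (W : Set (Fin d → ℝ)) := W.convex
  have hWclosed : IsClosed (W : Set (Fin d → ℝ)) := Submodule.closed_of_finiteDimensional W
  obtain ⟨f, u, v, hfK, huv, hfW⟩ :=
    geometric_hahn_banach_compact_closed hKconv hKcomp hWconv hWclosed hdisj
  have hfW0 : ∀ y ∈ W, f y = 0 := by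
    intro y hy
    by_contra hfy
    have : ((v - 1) / f y) • y ∈ W := W.smul_mem _ hy
    have h2 := hfW _ this
    rw [map_smul, smul_eq_mul, div_mul_cancel₀ _ hfy] at h2
    linarith
  have hv0 : v < 0 := by
    have := hfW 0 W.zero_mem
    rw [map_zero] at this
    linarith
  have hu0 : u < 0 := lt_trans huv hv0
  have haRK : ∀ k, k ∉ F → aR k ∈ K := by
    intro k hk
    exact subset_convexHull ℝ S ⟨k, hk, rfl⟩
  have haRW : ∀ j ∈ F, f (aR j) = 0 := by
    intro j hj
    exact hfW0 _ (Submodule.subset_span ⟨j, hj, rfl⟩)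
  -- minimum of -f over off-face columns
  set Fc : Finset (Fin n) := Finset.univ.filter (fun k => k ∉ F) with hFc
  have hFcne : Fc.Nonempty := ⟨k0, by simp [hFc, hk0]⟩
  obtain ⟨km, hkm, hkmmin⟩ := Finset.exists_min_image Fc (fun k => -f (aR k)) hFcne
  set m : ℝ := -f (aR km) with hm
  have hkmF : km ∉ F := (Finset.mem_filter.mp hkm).2
  have hm0 : 0 < m := by
    have := hfK _ (haRK km hkmF)
    rw [hm]
    linarith
  -- coordinates of the scaled functional
  set y : Fin d → ℝ := fun i => (-(f (fun j => if i = j then (1:ℝ) else 0))) / m with hy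
  have hfval : ∀ xx : Fin d → ℝ, ∑ i, xx i * y i = (-(f xx)) / m := by
    intro xx
    have hx' : f xx = ∑ i, xx i * f (fun j => if i = j then (1:ℝ) else 0) := by
      conv_lhs => rw [pi_eq_sum_univ xx]
      rw [map_sum]
      exact Finset.sum_congr rfl fun i _ => by rw [map_smul, smul_eq_mul]
    rw [hx', ← Finset.sum_neg_distrib, Finset.sum_div]
    refine Finset.sum_congr rfl fun i _ => ?_
    rw [hy]
    field_simp
  have hfaceval0 : ∀ j ∈ F, ∑ i, aR j i * y i = 0 := by
    intro j hj
    rw [hfval, haRW j hj]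
    simp
  have hfaceval1 : ∀ k, k ∉ F → 1 ≤ ∑ i, aR k i * y i := by
    intro k hk
    rw [hfval]
    rw [le_div_iff₀ hm0, one_mul, hm]
    exact hkmmin k (Finset.mem_filter.mpr ⟨Finset.mem_univ _, hk⟩)
  -- second system : rationalize the functional
  set rows6 : List ((Fin d ⊕ (Fin d ⊕ Fin n) → ℚ) × ℚ) :=
    F.toList.map (fun j =>
      (Sum.elim (fun i => a j i) (Sum.elim (fun i => -(a j i)) (fun _ => 0)), 0)) with hrows6
  set rows7 : List ((Fin d ⊕ (Fin d ⊕ Fin n) → ℚ) × ℚ) :=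
    (Fᶜ).toList.map (fun k =>
      (Sum.elim (fun i => a k i) (Sum.elim (fun i => -(a k i))
        (fun k' => if k' = k then (-1:ℚ) else 0)), 1)) with hrows7
  set yv : Fin d ⊕ (Fin d ⊕ Fin n) → ℝ :=
    Sum.elim (fun i => max (y i) 0) (Sum.elim (fun i => max (-(y i)) 0)
      (fun k => if k ∈ F then 0 else (∑ i, aR k i * y i) - 1)) with hyv
  have hyv0 : ∀ v, 0 ≤ yv v := by
    rintro (i | i | k)
    · exact le_max_right _ _
    · exact le_max_right _ _
    · simp only [hyv, Sum.elim_inr]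
      split_ifs with hkF
      · exact le_refl 0
      · linarith [hfaceval1 k hkF]
  have hysplit : ∀ i, max (y i) 0 - max (-(y i)) 0 = y i := fun i =>
    max_zero_sub_max_neg_zero_eq_self (y i)
  have hsolv2 : SolvesR (rows6 ++ rows7) yv := by
    intro c hc
    rcases List.mem_append.mp hc with hc6 | hc7
    · obtain ⟨j, hj, rfl⟩ := List.mem_map.mp hc6
      have hjF : j ∈ F := Finset.mem_toList.mp hj
      simp only
      rw [Fintype.sum_sum_type, Fintype.sum_sum_type]
      simp only [Sum.elim_inl, Sum.elim_inr, hyv]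
      rw [show (∑ k, (((0:ℚ)):ℝ) * (if k ∈ F then (0:ℝ) else (∑ i, aR k i * y i) - 1)) = 0 by
        apply Finset.sum_eq_zero; intro k _; simp]
      have e1 : ∑ i, ((a j i : ℚ) : ℝ) * max (y i) 0 + (∑ i, ((-(a j i) : ℚ) : ℝ) * max (-(y i)) 0 + 0)
          = ∑ i, aR j i * y i := by
        rw [add_zero, ← Finset.sum_add_distrib]
        refine Finset.sum_congr rfl fun i _ => ?_
        conv_rhs => rw [← hysplit i]
        push_cast
        simp only [haR]
        ring
      rw [e1, hfaceval0 j hjF]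
      simp
    · obtain ⟨k, hk, rfl⟩ := List.mem_map.mp hc7
      have hkF : k ∉ F := Finset.mem_compl.mp (Finset.mem_toList.mp hk)
      simp only
      rw [Fintype.sum_sum_type, Fintype.sum_sum_type]
      simp only [Sum.elim_inl, Sum.elim_inr, hyv]
      have e0 : ∑ k', (((if k' = k then (-1:ℚ) else 0) : ℚ) : ℝ)
          * (if k' ∈ F then (0:ℝ) else (∑ i, aR k' i * y i) - 1)
          = -((∑ i, aR k i * y i) - 1) := by
        rw [Finset.sum_congr rfl (fun k' _ => show (((if k' = k then (-1:ℚ) else 0) : ℚ) : ℝ)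
            * (if k' ∈ F then (0:ℝ) else (∑ i, aR k' i * y i) - 1)
            = if k' = k then -(if k' ∈ F then (0:ℝ) else (∑ i, aR k' i * y i) - 1) else 0 by
          split_ifs <;> push_cast <;> ring)]
        rw [Finset.sum_ite_eq' Finset.univ k
          (fun k' => -(if k' ∈ F then (0:ℝ) else (∑ i, aR k' i * y i) - 1))]
        simp [hkF]
      rw [e0]
      have e1 : ∑ i, ((a k i : ℚ) : ℝ) * max (y i) 0 + ∑ i, ((-(a k i) : ℚ) : ℝ) * max (-(y i)) 0
          = ∑ i, aR k i * y i := by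
        rw [← Finset.sum_add_distrib]
        refine Finset.sum_congr rfl fun i _ => ?_
        conv_rhs => rw [← hysplit i]
        push_cast
        simp only [haR]
        ring
      rw [← add_assoc, e1]
      push_cast
      ring
  obtain ⟨qv2, hqv20, hqv2⟩ := nonnegSolution _ yv hyv0 hsolv2
  refine ⟨fun i => qv2 (Sum.inl i) - qv2 (Sum.inr (Sum.inl i)), ?_, ?_⟩
  · intro j hj
    have hmem : ((Sum.elim (fun i => a j i) (Sum.elim (fun i => -(a j i)) (fun _ => 0)), (0:ℚ)))
        ∈ rows6 ++ rows7 := by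
      apply List.mem_append_left
      rw [hrows6]
      exact List.mem_map_of_mem (Finset.mem_toList.mpr hj)
    have := hqv2 _ hmem
    simp only at this
    rw [Fintype.sum_sum_type, Fintype.sum_sum_type] at this
    simp only [Sum.elim_inl, Sum.elim_inr] at this
    rw [show (∑ k, (0:ℚ) * qv2 (Sum.inr (Sum.inr k))) = 0 by
      apply Finset.sum_eq_zero; intro k _; ring] at this
    rw [add_zero] at this
    rw [← this, ← Finset.sum_add_distrib]
    refine Finset.sum_congr rfl fun i _ => ?_
    ring
  · intro k hk
    have hmem : ((Sum.elim (fun i => a k i) (Sum.elim (fun i => -(a k i))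
        (fun k' => if k' = k then (-1:ℚ) else 0)), (1:ℚ))) ∈ rows6 ++ rows7 := by
      apply List.mem_append_right
      rw [hrows7]
      exact List.mem_map_of_mem (Finset.mem_toList.mpr (Finset.mem_compl.mpr hk))
    have := hqv2 _ hmem
    simp only at this
    rw [Fintype.sum_sum_type, Fintype.sum_sum_type] at this
    simp only [Sum.elim_inl, Sum.elim_inr] at this
    have e0 : ∑ k', (if k' = k then (-1:ℚ) else 0) * qv2 (Sum.inr (Sum.inr k'))
        = -(qv2 (Sum.inr (Sum.inr k))) := by
      rw [Finset.sum_congr rfl (fun k' _ => show (if k' = k then (-1:ℚ) else 0)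
          * qv2 (Sum.inr (Sum.inr k')) = if k' = k then -(qv2 (Sum.inr (Sum.inr k'))) else 0 by
        split_ifs <;> ring)]
      rw [Finset.sum_ite_eq' Finset.univ k (fun k' => -(qv2 (Sum.inr (Sum.inr k'))))]
      simp
    rw [e0] at this
    have e1 : ∑ i, (fun i => qv2 (Sum.inl i) - qv2 (Sum.inr (Sum.inl i))) i * a k i
        = ∑ i, a k i * qv2 (Sum.inl i) + ∑ i, -(a k i) * qv2 (Sum.inr (Sum.inl i)) := by
      rw [← Finset.sum_add_distrib]
      refine Finset.sum_congr rfl fun i _ => ?_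
      ring
    calc (0:ℚ) < 1 + qv2 (Sum.inr (Sum.inr k)) := by
          have := hqv20 (Sum.inr (Sum.inr k))
          linarith
      _ = ∑ i, (fun i => qv2 (Sum.inl i) - qv2 (Sum.inr (Sum.inl i))) i * a k i := by
          rw [e1]
          linarith [this]

end Gordan

end ToricAux
namespace ToricAux

variable {d n : ℕ}

theorem exists_int_mul (q : ℚ) (N : ℕ) (h : q.den ∣ N) : ∃ m : ℤ, (m : ℚ) = q * N := by
  obtain ⟨c, hc⟩ := h
  refine ⟨q.num * c, ?_⟩
  rw [hc]
  push_cast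
  rw [show ((q.num : ℚ)) = q * q.den from (Rat.mul_den_eq_num q).symm]
  ring

theorem isPrimeFace_of_ratL (A : Matrix (Fin d) (Fin n) ℤ) (F : Finset (Fin n)) (L : Fin d → ℚ)
    (h0 : ∀ j ∈ F, ∑ i, L i * (A i j : ℚ) = 0)
    (hpos : ∀ k, k ∉ F → 0 < ∑ i, L i * (A i k : ℚ)) : IsPrimeFaceIdx A F := by
  set N : ℕ := ∏ i, (L i).den with hN
  have hN0 : 0 < (N : ℚ) := by
    rw [hN]
    push_cast
    exact Finset.prod_pos fun i _ => by exact_mod_cast (L i).pos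
  have hint : ∀ i, ∃ m : ℤ, (m : ℚ) = L i * N := fun i =>
    exists_int_mul _ _ (Finset.dvd_prod_of_mem _ (Finset.mem_univ i))
  choose c hc using hint
  set Lz : (Fin d → ℤ) →ₗ[ℤ] ℤ :=
    { toFun := fun x => ∑ i, c i * x i
      map_add' := by
        intro x y
        simp only [Pi.add_apply, mul_add]
        rw [Finset.sum_add_distrib]
      map_smul' := by
        intro m x
        simp only [Pi.smul_apply, smul_eq_mul, RingHom.id_apply]
        rw [Finset.mul_sum]
        exact Finset.sum_congr rfl fun i _ => by ring } with hLz
  have hval : ∀ k, ((Lz (fun i => A i k) : ℤ) : ℚ) = N * ∑ i, L i * (A i k : ℚ) := by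
    intro k
    show (((∑ i, c i * A i k : ℤ)) : ℚ) = _
    push_cast
    rw [Finset.mul_sum]
    exact Finset.sum_congr rfl fun i _ => by rw [hc i]; ring
  refine ⟨Lz, ?_, ?_⟩
  · intro k
    by_cases hk : k ∈ F
    · have : ((Lz (fun i => A i k) : ℤ) : ℚ) = 0 := by rw [hval, h0 k hk, mul_zero]
      have : Lz (fun i => A i k) = 0 := by exact_mod_cast this
      rw [this]
    · have : (0:ℚ) < ((Lz (fun i => A i k) : ℤ) : ℚ) := by
        rw [hval]
        exact mul_pos hN0 (hpos k hk)
      exact_mod_cast le_of_lt this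
  · intro k
    constructor
    · intro hk
      have : ((Lz (fun i => A i k) : ℤ) : ℚ) = 0 := by rw [hval, h0 k hk, mul_zero]
      exact_mod_cast this
    · intro hzero
      by_contra hk
      have : (0:ℚ) < ((Lz (fun i => A i k) : ℤ) : ℚ) := by
        rw [hval]
        exact mul_pos hN0 (hpos k hk)
      rw [hzero] at this
      norm_num at this

theorem Hq_of_star (A : Matrix (Fin d) (Fin n) ℤ) (F : Finset (Fin n))
    (hstar : ∀ u w : Fin n →₀ ℕ, svec (colsA A) u = svec (colsA A) w →
      w.support ⊆ F → u.support ⊆ F) :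
    ∀ lam : Fin n → ℚ, (∀ k, k ∉ F → 0 ≤ lam k) →
      (∑ k, lam k • (fun i => (A i k : ℚ))) = 0 → ∀ k, k ∉ F → lam k = 0 := by
  intro lam hnn hsum
  set N : ℕ := ∏ k, (lam k).den with hN
  have hN0 : 0 < (N : ℚ) := by
    rw [hN]
    push_cast
    exact Finset.prod_pos fun k _ => by exact_mod_cast (lam k).pos
  have hint : ∀ k, ∃ m : ℤ, (m : ℚ) = lam k * N := fun k =>
    exists_int_mul _ _ (Finset.dvd_prod_of_mem _ (Finset.mem_univ k))
  choose m hm using hint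
  set u : Fin n →₀ ℕ := Finsupp.equivFunOnFinite.symm (fun k => (m k).toNat) with hu
  set w : Fin n →₀ ℕ := Finsupp.equivFunOnFinite.symm (fun k => (-(m k)).toNat) with hwdef
  have huk : ∀ k, u k = (m k).toNat := fun k => rfl
  have hwk : ∀ k, w k = (-(m k)).toNat := fun k => rfl
  have hrel : ∀ i, ∑ k, (m k : ℤ) * A i k = 0 := by
    intro i
    have h1 := congrFun hsum i
    rw [Finset.sum_apply] at h1
    simp only [Pi.smul_apply, smul_eq_mul, Pi.zero_apply] at h1
    have h2 : ∑ k, ((m k : ℚ)) * (A i k : ℚ) = 0 := by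
      rw [Finset.sum_congr rfl fun k _ => by rw [hm k]]
      rw [show (∑ k, lam k * (N:ℚ) * (A i k : ℚ)) = (N:ℚ) * ∑ k, lam k * (A i k : ℚ) by
        rw [Finset.mul_sum]; exact Finset.sum_congr rfl fun k _ => by ring]
      rw [h1, mul_zero]
    exact_mod_cast h2
  have hsvec : svec (colsA A) u = svec (colsA A) w := by
    funext i
    rw [svec, svec, Finset.sum_apply, Finset.sum_apply]
    simp only [Pi.smul_apply, smul_eq_mul, colsA]
    rw [← sub_eq_zero, ← Finset.sum_sub_distrib]
    rw [show (∑ k, ((u k : ℤ) * A i k - (w k : ℤ) * A i k)) = ∑ k, (m k : ℤ) * A i k from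
      Finset.sum_congr rfl fun k _ => by
        rw [huk, hwk, ← sub_mul, Int.toNat_sub_toNat_neg]]
    exact hrel i
  have hws : w.support ⊆ F := by
    intro k hk
    rw [Finsupp.mem_support_iff, hwk] at hk
    have hmk : m k < 0 := by
      by_contra h
      push_neg at h
      apply hk
      omega
    by_contra hkF
    have h1 : (0:ℚ) ≤ lam k := hnn k hkF
    have h2 : (m k : ℚ) = lam k * N := hm k
    have : (0:ℚ) ≤ (m k : ℚ) := by
      rw [h2]
      exact mul_nonneg h1 (le_of_lt hN0)
    have : (0:ℤ) ≤ m k := by exact_mod_cast this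
    omega
  have hus := hstar u w hsvec hws
  intro k hk
  have hu0 : u k = 0 := by
    by_contra h
    exact hk (hus (Finsupp.mem_support_iff.mpr (by rw [huk]; exact h)))
  have hw0 : w k = 0 := by
    by_contra h
    exact hk (hws (Finsupp.mem_support_iff.mpr (by rw [hwk]; exact h)))
  rw [huk] at hu0
  rw [hwk] at hw0
  have hm0 : m k = 0 := by omega
  have : lam k * N = 0 := by rw [← hm k, hm0]; simp
  rcases mul_eq_zero.mp this with h | h
  · exact h
  · rw [h] at hN0; norm_num at hN0

end ToricAux
namespace ToricAux

variable {d n : ℕ}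

theorem prod_not_mem_prime {R : Type*} [CommRing R] {P : Ideal R} (hP : P.IsPrime)
    {ι : Type*} {s : Finset ι} {f : ι → R} (h : ∀ i ∈ s, f i ∉ P) : ∏ i ∈ s, f i ∉ P := by
  classical
  induction s using Finset.induction_on with
  | empty =>
      rw [Finset.prod_empty]
      intro h1
      exact hP.ne_top ((Ideal.eq_top_iff_one P).mpr h1)
  | insert _ _ hx ih =>
      rw [Finset.prod_insert hx]
      intro hmem
      rcases hP.mem_or_mem hmem with h1 | h1
      · exact h _ (Finset.mem_insert_self _ _) h1
      · exact ih (fun i hi => h i (Finset.mem_insert_of_mem hi)) h1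

theorem monomial_mem_of_X_mem {P : Ideal (MvPolynomial (Fin n) ℂ)} {u : Fin n →₀ ℕ}
    {k : Fin n} {c : ℂ} (hXk : MvPolynomial.X k ∈ P) (hk : u k ≠ 0) :
    MvPolynomial.monomial u c ∈ P := by
  classical
  have hXmon : (MvPolynomial.X k : MvPolynomial (Fin n) ℂ)
      = MvPolynomial.monomial (Finsupp.single k 1) 1 := by
    rw [← pow_one (MvPolynomial.X k : MvPolynomial (Fin n) ℂ), MvPolynomial.X_pow_eq_monomial]
  have hsplit : (u - Finsupp.single k 1) + Finsupp.single k 1 = u := by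
    ext j
    by_cases hj : j = k
    · subst hj
      simp only [Finsupp.add_apply, Finsupp.tsub_apply, Finsupp.single_eq_same]
      omega
    · simp [Finsupp.single_eq_of_ne hj]
  have : MvPolynomial.monomial u c
      = MvPolynomial.monomial (u - Finsupp.single k 1) c * MvPolynomial.X k := by
    rw [hXmon, MvPolynomial.monomial_mul, mul_one, hsplit]
  rw [this]
  exact Ideal.mul_mem_left _ _ hXk

theorem monomial_not_mem {P : Ideal (MvPolynomial (Fin n) ℂ)} (hP : P.IsPrime)
    {u : Fin n →₀ ℕ} {c : ℂ} (hc : c ≠ 0)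
    (h : ∀ k ∈ u.support, MvPolynomial.X k ∉ P) : MvPolynomial.monomial u c ∉ P := by
  rw [MvPolynomial.monomial_eq]
  intro hmem
  rcases hP.mem_or_mem hmem with hC | hprod
  · apply hP.ne_top
    rw [Ideal.eq_top_iff_one]
    have h2 : (MvPolynomial.C (c⁻¹) : MvPolynomial (Fin n) ℂ) * MvPolynomial.C c ∈ P :=
      Ideal.mul_mem_left _ _ hC
    rwa [← map_mul, inv_mul_cancel₀ hc, map_one] at h2
  · exact prod_not_mem_prime hP
      (fun k hk hpow => h k hk (hP.mem_of_pow_mem _ hpow)) hprod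

theorem forward_classify (A : Matrix (Fin d) (Fin n) ℤ) (P : Ideal (MvPolynomial (Fin n) ℂ))
    (hP : P.IsPrime) (hcont : toricIdeal A ≤ P) (hgr : IsGradedIdeal A P) :
    ∃ F : Finset (Fin n), IsPrimeFaceIdx A F ∧ P = facePrimeIdeal A F := by
  classical
  set F : Finset (Fin n) :=
    Finset.univ.filter (fun k => (MvPolynomial.X k : MvPolynomial (Fin n) ℂ) ∉ P) with hF
  have hFmem : ∀ k, k ∈ F ↔ (MvPolynomial.X k : MvPolynomial (Fin n) ℂ) ∉ P := by
    intro k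
    rw [hF]
    simp
  have hstar : ∀ u w : Fin n →₀ ℕ, svec (colsA A) u = svec (colsA A) w →
      w.support ⊆ F → u.support ⊆ F := by
    intro u w hsv hws k hk
    rw [hFmem]
    intro hXk
    have humem : MvPolynomial.monomial u (1:ℂ) ∈ P :=
      monomial_mem_of_X_mem hXk (Finsupp.mem_support_iff.mp hk)
    have hbin : MvPolynomial.monomial u (1:ℂ) - MvPolynomial.monomial w 1 ∈ P :=
      hcont (by rw [toricIdeal_eq]; exact binomial_mem_ker _ hsv)
    have hwmem : MvPolynomial.monomial w (1:ℂ) ∈ P := by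
      have := P.sub_mem humem hbin
      simpa using this
    exact monomial_not_mem hP one_ne_zero (fun k' hk' => (hFmem k').mp (hws hk')) hwmem
  obtain ⟨L, hL0, hLpos⟩ :=
    exists_face_functional (fun k i => (A i k : ℚ)) F (Hq_of_star A F hstar)
  refine ⟨F, isPrimeFace_of_ratL A F L hL0 hLpos, le_antisymm ?_ ?_⟩
  · -- P ≤ facePrimeIdeal
    intro p hp
    rw [facePrime_eq_ker, RingHom.mem_ker]
    show fmapF (colsA A) F p = 0
    rw [fmapF_eq_zero_iff]
    intro g
    rw [bucketF, ← Finset.sum_filter]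
    set B := p.support.filter (fun u => u.support ⊆ F ∧ svec (colsA A) u = g) with hB
    rcases Finset.eq_empty_or_nonempty B with hBe | ⟨u0, hu0⟩
    · rw [hBe, Finset.sum_empty]
    · have hu0' := Finset.mem_filter.mp hu0
      have hu0p : u0 ∈ p.support := hu0'.1
      have hu0F : u0.support ⊆ F := hu0'.2.1
      have hu0g : svec (colsA A) u0 = g := hu0'.2.2
      set q := homogComponentA A (-g) p with hq
      have hqP : q ∈ P := hgr p hp (-g)
      set Bc := p.support.filter (fun u => degA A u = -g) with hBc
      have hqeq : q = ∑ u ∈ Bc, MvPolynomial.monomial u (MvPolynomial.coeff u p) :=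
        homog_eq A (-g) p
      have hBsub : B ⊆ Bc := by
        intro u hu
        have hu' := Finset.mem_filter.mp hu
        refine Finset.mem_filter.mpr ⟨hu'.1, ?_⟩
        rw [degA_eq, hu'.2.2]
      set qF := ∑ u ∈ B, MvPolynomial.monomial u (MvPolynomial.coeff u p) with hqF
      have hdiff : q - qF = ∑ u ∈ Bc \ B, MvPolynomial.monomial u (MvPolynomial.coeff u p) := by
        rw [hqeq, hqF, ← Finset.sum_sdiff hBsub]
        ring
      have hdiffP : q - qF ∈ P := by
        rw [hdiff]
        apply Ideal.sum_mem
        intro u hu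
        have hu1 := (Finset.mem_sdiff.mp hu).1
        have hu2 := (Finset.mem_sdiff.mp hu).2
        have hsvu : svec (colsA A) u = g := by
          have hdeg : degA A u = -g := (Finset.mem_filter.mp hu1).2
          rw [degA_eq] at hdeg
          exact neg_injective hdeg
        have hnotsub : ¬(u.support ⊆ F) := fun hsub =>
          hu2 (Finset.mem_filter.mpr ⟨(Finset.mem_filter.mp hu1).1, hsub, hsvu⟩)
        obtain ⟨k, hku, hkF⟩ := Finset.not_subset.mp hnotsub
        have hXk : (MvPolynomial.X k : MvPolynomial (Fin n) ℂ) ∈ P :=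
          not_not.mp (fun h => hkF ((hFmem k).mpr h))
        exact monomial_mem_of_X_mem hXk (Finsupp.mem_support_iff.mp hku)
      have hqFP : qF ∈ P := by
        have := P.sub_mem hqP hdiffP
        simpa using this
      set s := ∑ u ∈ B, MvPolynomial.coeff u p with hs
      have hbinP : qF - MvPolynomial.monomial u0 s ∈ P := by
        rw [show MvPolynomial.monomial u0 s
            = ∑ u ∈ B, MvPolynomial.monomial u0 (MvPolynomial.coeff u p) from by
          rw [hs]; exact map_sum (MvPolynomial.monomial u0) _ _]
        rw [hqF, ← Finset.sum_sub_distrib]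
        apply Ideal.sum_mem
        intro u hu
        have husv : svec (colsA A) u = g := (Finset.mem_filter.mp hu).2.2
        have hbin0 : MvPolynomial.monomial u (1:ℂ) - MvPolynomial.monomial u0 1
            ∈ toricIdeal A := by
          rw [toricIdeal_eq]
          exact binomial_mem_ker _ (husv.trans hu0g.symm)
        have heq : MvPolynomial.monomial u (MvPolynomial.coeff u p)
            - MvPolynomial.monomial u0 (MvPolynomial.coeff u p)
            = MvPolynomial.C (MvPolynomial.coeff u p)
              * (MvPolynomial.monomial u (1:ℂ) - MvPolynomial.monomial u0 1) := by
          rw [mul_sub, MvPolynomial.C_mul_monomial, MvPolynomial.C_mul_monomial,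
            mul_one]
        rw [heq]
        exact Ideal.mul_mem_left _ _ (hcont hbin0)
      have hmonP : MvPolynomial.monomial u0 s ∈ P := by
        have := P.sub_mem hqFP hbinP
        simpa using this
      by_contra hs0
      have hmon1 : MvPolynomial.monomial u0 (1:ℂ) ∈ P := by
        have := Ideal.mul_mem_left P (MvPolynomial.C s⁻¹) hmonP
        rwa [MvPolynomial.C_mul_monomial, inv_mul_cancel₀ hs0] at this
      exact monomial_not_mem hP one_ne_zero
        (fun k hk => (hFmem k).mp (hu0F hk)) hmon1
  · -- facePrimeIdeal ≤ P
    rw [facePrimeIdeal]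
    apply sup_le
    · rw [Ideal.span_le]
      rintro x ⟨k, hk, rfl⟩
      have hXk : (MvPolynomial.X k : MvPolynomial (Fin n) ℂ) ∈ P :=
        not_not.mp (fun h => hk ((hFmem k).mpr h))
      exact hXk
    · exact le_trans (map_rename_face_le A F) hcont

end ToricAux

/-- for `A` with pointed semigroup `ℕA`, the `ℤ^d`-graded prime ideals of
`R_A` containing the toric ideal `I_A` are exactly the ideals `I_A^F = ⟨∂_k : k ∉ F⟩ +
R_A·I_F` for `F` a prime face of `A`; moreover `R_A/I_A^F ≅ R_F/I_F`. -/
theorem graded_primes_over_toric_ideal (A : Matrix (Fin d) (Fin n) ℤ)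
    (hpointed : ∀ v ∈ AddSubmonoid.closure
        (Set.range (fun j : Fin n => fun i : Fin d => A i j)),
      -v ∈ AddSubmonoid.closure (Set.range (fun j : Fin n => fun i : Fin d => A i j)) →
        v = 0) :
    (∀ P : Ideal (MvPolynomial (Fin n) ℂ),
      (P.IsPrime ∧ toricIdeal A ≤ P ∧ IsGradedIdeal A P) ↔
        ∃ F : Finset (Fin n), IsPrimeFaceIdx A F ∧ P = facePrimeIdeal A F) ∧
    (∀ F : Finset (Fin n), IsPrimeFaceIdx A F →
      Nonempty ((MvPolynomial (Fin n) ℂ ⧸ facePrimeIdeal A F) ≃+*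
        (MvPolynomial {k : Fin n // k ∈ F} ℂ ⧸ faceToricIdeal A F))) := by
  constructor
  · intro P
    constructor
    · rintro ⟨hP, hcont, hgr⟩
      exact ToricAux.forward_classify A P hP hcont hgr
    · rintro ⟨F, hface, rfl⟩
      obtain ⟨L, h1, h2⟩ := hface
      exact ⟨ToricAux.facePrime_isPrime A F, ToricAux.toric_le_facePrime A F L h1 h2,
        ToricAux.graded_facePrime A F⟩
  · intro F _
    exact ToricAux.quotient_iso A F
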